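/- Let X, Y ⊆ ℝⁿ and s₁,t₁,s₃ ∈ ℝ. The pointwise product of kernels is a bilinear and continuous map from K_{s₁,s₁+s₃,s₃}(X×Y) × K_{t₁,t₁+s₃,s₃}(X×Y) to K_{s₁+t₁,s₁+s₃+t₁,s₃}(X×Y). -/

import Mathlib

set_option maxHeartbeats 800000


open Set Metric

noncomputable section

abbrev Euc (n : ℕ) := EuclideanSpace ℝ (Fin n)

/-- The set of values `‖x-y‖^s * ‖K x y‖` over distinct points of `X × Y`. -/
def kSet1 {n : ℕ} (X Y : Set (Euc n)) (s : ℝ) (K : Euc n → Euc n → ℂ) : Set ℝ :=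
  {c | ∃ x ∈ X, ∃ y ∈ Y, x ≠ y ∧ c = ‖x - y‖ ^ s * ‖K x y‖}

/-- The set of values of the Hölder–type quotient of a kernel. -/
def kSet2 {n : ℕ} (X Y : Set (Euc n)) (s₂ s₃ : ℝ) (K : Euc n → Euc n → ℂ) : Set ℝ :=
  {c | ∃ x' ∈ X, ∃ x'' ∈ X, x' ≠ x'' ∧ ∃ y ∈ Y, 2 * ‖x' - x''‖ ≤ ‖x' - y‖ ∧
       c = ‖x' - y‖ ^ s₂ / ‖x' - x''‖ ^ s₃ * ‖K x' y - K x'' y‖}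

/-- Membership in the class `𝒦_{s₁,s₂,s₃}(X×Y)` of potential type kernels. -/
def memK {n : ℕ} (X Y : Set (Euc n)) (s₁ s₂ s₃ : ℝ) (K : Euc n → Euc n → ℂ) : Prop :=
  ContinuousOn (fun p : Euc n × Euc n => K p.1 p.2)
      ((X ×ˢ Y) \ {p : Euc n × Euc n | p.1 = p.2}) ∧
  BddAbove (kSet1 X Y s₁ K) ∧ BddAbove (kSet2 X Y s₂ s₃ K)

/-- The norm of the class `𝒦_{s₁,s₂,s₃}(X×Y)`. -/
def kNorm {n : ℕ} (X Y : Set (Euc n)) (s₁ s₂ s₃ : ℝ) (K : Euc n → Euc n → ℂ) : ℝ :=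
  sSup (kSet1 X Y s₁ K) + sSup (kSet2 X Y s₂ s₃ K)

lemma rpow_comparable {r r' : ℝ} (hr : 0 < r) (hr' : 0 < r') (h1 : r ≤ 2*r')
    (h2 : r' ≤ 2*r) (s : ℝ) : r ^ s ≤ 2 ^ |s| * r' ^ s := by
  rcases le_or_gt 0 s with hs | hs
  · rw [abs_of_nonneg hs]
    calc r ^ s ≤ (2*r') ^ s := Real.rpow_le_rpow hr.le h1 hs
    _ = 2 ^ s * r' ^ s := Real.mul_rpow (by norm_num) hr'.le
  · rw [abs_of_neg hs]
    have h3 : r' / 2 ≤ r := by linarith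
    calc r ^ s ≤ (r'/2) ^ s := Real.rpow_le_rpow_of_nonpos (by linarith) h3 hs.le
    _ = 2 ^ (-s) * r' ^ s := by
        rw [Real.div_rpow hr'.le (by norm_num), Real.rpow_neg (by norm_num)]
        ring

lemma kSet1_nonneg {n : ℕ} (X Y : Set (Euc n)) (s : ℝ) (K : Euc n → Euc n → ℂ) :
    ∀ c ∈ kSet1 X Y s K, 0 ≤ c := by
  rintro c ⟨x, hx, y, hy, hxy, rfl⟩; positivity

lemma kSet2_nonneg {n : ℕ} (X Y : Set (Euc n)) (s₂ s₃ : ℝ) (K : Euc n → Euc n → ℂ) :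
    ∀ c ∈ kSet2 X Y s₂ s₃ K, 0 ≤ c := by
  rintro c ⟨x', hx', x'', hx'', hne, y, hy, hsep, rfl⟩; positivity

/-- The pointwise product is bilinear and continuous from
`𝒦_{s₁,s₁+s₃,s₃}(X×Y) × 𝒦_{t₁,t₁+s₃,s₃}(X×Y)` to `𝒦_{s₁+t₁,s₁+s₃+t₁,s₃}(X×Y)`. -/
theorem stmt_4 {n : ℕ} (X Y : Set (Euc n)) (s₁ t₁ s₃ : ℝ) :
    ∃ C > (0 : ℝ), ∀ K₁ K₂ : Euc n → Euc n → ℂ,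
      memK X Y s₁ (s₁ + s₃) s₃ K₁ → memK X Y t₁ (t₁ + s₃) s₃ K₂ →
      memK X Y (s₁ + t₁) (s₁ + s₃ + t₁) s₃ (fun x y => K₁ x y * K₂ x y) ∧
      kNorm X Y (s₁ + t₁) (s₁ + s₃ + t₁) s₃ (fun x y => K₁ x y * K₂ x y) ≤
        C * kNorm X Y s₁ (s₁ + s₃) s₃ K₁ * kNorm X Y t₁ (t₁ + s₃) s₃ K₂ := by
  set A : ℝ := 2 ^ |s₁| with hAdef
  have hA1 : (1:ℝ) ≤ A := Real.one_le_rpow one_le_two (abs_nonneg _)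
  refine ⟨A, by linarith, ?_⟩
  intro K₁ K₂ h₁ h₂
  obtain ⟨hc₁, hb₁₁, hb₁₂⟩ := h₁
  obtain ⟨hc₂, hb₂₁, hb₂₂⟩ := h₂
  set a₁ := sSup (kSet1 X Y s₁ K₁) with ha₁def
  set b₁ := sSup (kSet2 X Y (s₁ + s₃) s₃ K₁) with hb₁def
  set a₂ := sSup (kSet1 X Y t₁ K₂) with ha₂def
  set b₂ := sSup (kSet2 X Y (t₁ + s₃) s₃ K₂) with hb₂def
  have na₁ : 0 ≤ a₁ := Real.sSup_nonneg (kSet1_nonneg X Y s₁ K₁)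
  have nb₁ : 0 ≤ b₁ := Real.sSup_nonneg (kSet2_nonneg X Y (s₁+s₃) s₃ K₁)
  have na₂ : 0 ≤ a₂ := Real.sSup_nonneg (kSet1_nonneg X Y t₁ K₂)
  have nb₂ : 0 ≤ b₂ := Real.sSup_nonneg (kSet2_nonneg X Y (t₁+s₃) s₃ K₂)
  -- bound on kSet1 of the product
  have hP1 : ∀ c ∈ kSet1 X Y (s₁ + t₁) (fun x y => K₁ x y * K₂ x y), c ≤ a₁ * a₂ := by
    rintro c ⟨x, hx, y, hy, hxy, rfl⟩
    have hr : (0:ℝ) < ‖x - y‖ := norm_pos_iff.2 (sub_ne_zero.2 hxy)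
    have m1 : ‖x - y‖ ^ s₁ * ‖K₁ x y‖ ≤ a₁ :=
      le_csSup hb₁₁ ⟨x, hx, y, hy, hxy, rfl⟩
    have m2 : ‖x - y‖ ^ t₁ * ‖K₂ x y‖ ≤ a₂ :=
      le_csSup hb₂₁ ⟨x, hx, y, hy, hxy, rfl⟩
    calc ‖x - y‖ ^ (s₁ + t₁) * ‖K₁ x y * K₂ x y‖
        = (‖x - y‖ ^ s₁ * ‖K₁ x y‖) * (‖x - y‖ ^ t₁ * ‖K₂ x y‖) := by
          rw [Real.rpow_add hr, norm_mul]; ring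
      _ ≤ a₁ * a₂ := mul_le_mul m1 m2 (by positivity) (le_trans (by positivity) m1)
  -- bound on kSet2 of the product
  have hP2 : ∀ c ∈ kSet2 X Y (s₁ + s₃ + t₁) s₃ (fun x y => K₁ x y * K₂ x y),
      c ≤ b₁ * a₂ + A * (a₁ * b₂) := by
    rintro c ⟨x', hx', x'', hx'', hne, y, hy, hsep, rfl⟩
    have hd : (0:ℝ) < ‖x' - x''‖ := norm_pos_iff.2 (sub_ne_zero.2 hne)
    have hr : (0:ℝ) < ‖x' - y‖ := by linarith
    have hxy' : x' ≠ y := sub_ne_zero.1 (norm_pos_iff.1 hr)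
    have htri : ‖x' - y‖ - ‖x'' - y‖ ≤ ‖x' - x''‖ := by
      have := norm_sub_norm_le (x' - y) (x'' - y)
      simpa using this
    have htri2 : ‖x'' - y‖ - ‖x' - y‖ ≤ ‖x' - x''‖ := by
      have := norm_sub_norm_le (x'' - y) (x' - y)
      rw [show x'' - y - (x' - y) = -(x' - x'') by abel, norm_neg] at this
      linarith
    have hcmp1 : ‖x' - y‖ ≤ 2 * ‖x'' - y‖ := by linarith
    have hcmp2 : ‖x'' - y‖ ≤ 2 * ‖x' - y‖ := by linarith
    have hr'' : (0:ℝ) < ‖x'' - y‖ := by linarith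
    have hxy'' : x'' ≠ y := sub_ne_zero.1 (norm_pos_iff.1 hr'')
    have hkey : ‖x' - y‖ ^ s₁ ≤ A * ‖x'' - y‖ ^ s₁ :=
      rpow_comparable hr hr'' hcmp1 hcmp2 s₁
    -- memberships
    have m1 : ‖x' - y‖ ^ (s₁+s₃) / ‖x' - x''‖ ^ s₃ * ‖K₁ x' y - K₁ x'' y‖ ≤ b₁ :=
      le_csSup hb₁₂ ⟨x', hx', x'', hx'', hne, y, hy, hsep, rfl⟩
    have m2 : ‖x' - y‖ ^ t₁ * ‖K₂ x' y‖ ≤ a₂ :=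
      le_csSup hb₂₁ ⟨x', hx', y, hy, hxy', rfl⟩
    have m3 : ‖x'' - y‖ ^ s₁ * ‖K₁ x'' y‖ ≤ a₁ :=
      le_csSup hb₁₁ ⟨x'', hx'', y, hy, hxy'', rfl⟩
    have m4 : ‖x' - y‖ ^ (t₁+s₃) / ‖x' - x''‖ ^ s₃ * ‖K₂ x' y - K₂ x'' y‖ ≤ b₂ :=
      le_csSup hb₂₂ ⟨x', hx', x'', hx'', hne, y, hy, hsep, rfl⟩
    have e1 : ‖x' - y‖ ^ (s₁+s₃+t₁) = ‖x' - y‖ ^ (s₁+s₃) * ‖x' - y‖ ^ t₁ :=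
      Real.rpow_add hr _ _
    have e2 : ‖x' - y‖ ^ (s₁+s₃+t₁) = ‖x' - y‖ ^ s₁ * ‖x' - y‖ ^ (t₁+s₃) := by
      rw [← Real.rpow_add hr]; ring_nf
    have hdecomp : ‖K₁ x' y * K₂ x' y - K₁ x'' y * K₂ x'' y‖ ≤
        ‖K₁ x' y - K₁ x'' y‖ * ‖K₂ x' y‖ + ‖K₁ x'' y‖ * ‖K₂ x' y - K₂ x'' y‖ := by
      calc ‖K₁ x' y * K₂ x' y - K₁ x'' y * K₂ x'' y‖
          = ‖(K₁ x' y - K₁ x'' y) * K₂ x' y + K₁ x'' y * (K₂ x' y - K₂ x'' y)‖ := by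
            rw [show K₁ x' y * K₂ x' y - K₁ x'' y * K₂ x'' y =
              (K₁ x' y - K₁ x'' y) * K₂ x' y + K₁ x'' y * (K₂ x' y - K₂ x'' y) from by ring]
        _ ≤ ‖(K₁ x' y - K₁ x'' y) * K₂ x' y‖ + ‖K₁ x'' y * (K₂ x' y - K₂ x'' y)‖ :=
            norm_add_le _ _
        _ = ‖K₁ x' y - K₁ x'' y‖ * ‖K₂ x' y‖ + ‖K₁ x'' y‖ * ‖K₂ x' y - K₂ x'' y‖ := by
            rw [norm_mul, norm_mul]
    have hQ : (0:ℝ) ≤ ‖x' - y‖ ^ (s₁+s₃+t₁) / ‖x' - x''‖ ^ s₃ := by positivity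
    calc ‖x' - y‖ ^ (s₁+s₃+t₁) / ‖x' - x''‖ ^ s₃ * ‖K₁ x' y * K₂ x' y - K₁ x'' y * K₂ x'' y‖
        ≤ ‖x' - y‖ ^ (s₁+s₃+t₁) / ‖x' - x''‖ ^ s₃ *
          (‖K₁ x' y - K₁ x'' y‖ * ‖K₂ x' y‖ + ‖K₁ x'' y‖ * ‖K₂ x' y - K₂ x'' y‖) :=
          mul_le_mul_of_nonneg_left hdecomp hQ
      _ = (‖x' - y‖ ^ (s₁+s₃) / ‖x' - x''‖ ^ s₃ * ‖K₁ x' y - K₁ x'' y‖) *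
            (‖x' - y‖ ^ t₁ * ‖K₂ x' y‖) +
          (‖x' - y‖ ^ s₁ * ‖K₁ x'' y‖) *
            (‖x' - y‖ ^ (t₁+s₃) / ‖x' - x''‖ ^ s₃ * ‖K₂ x' y - K₂ x'' y‖) := by
          rw [mul_add]
          congr 1
          · rw [e1]; ring
          · rw [e2]; ring
      _ ≤ b₁ * a₂ + (A * a₁) *
            (‖x' - y‖ ^ (t₁+s₃) / ‖x' - x''‖ ^ s₃ * ‖K₂ x' y - K₂ x'' y‖) := by
          have hA0 : (0:ℝ) ≤ A := by linarith
          have m3' : ‖x' - y‖ ^ s₁ * ‖K₁ x'' y‖ ≤ A * a₁ := by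
            calc ‖x' - y‖ ^ s₁ * ‖K₁ x'' y‖
                ≤ (A * ‖x'' - y‖ ^ s₁) * ‖K₁ x'' y‖ :=
                  mul_le_mul_of_nonneg_right hkey (norm_nonneg _)
              _ = A * (‖x'' - y‖ ^ s₁ * ‖K₁ x'' y‖) := by ring
              _ ≤ A * a₁ := mul_le_mul_of_nonneg_left m3 hA0
          exact add_le_add
            (mul_le_mul m1 m2 (by positivity) (le_trans (by positivity) m1))
            (mul_le_mul_of_nonneg_right m3' (by positivity))
      _ ≤ b₁ * a₂ + (A * a₁) * b₂ := by
          have hA0 : (0:ℝ) ≤ A := by linarith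
          exact add_le_add_right
            (mul_le_mul_of_nonneg_left m4 (mul_nonneg hA0 na₁)) _
      _ = b₁ * a₂ + A * (a₁ * b₂) := by ring
  constructor
  · exact ⟨hc₁.mul hc₂, ⟨a₁ * a₂, fun c hc => hP1 c hc⟩,
      ⟨b₁ * a₂ + A * (a₁ * b₂), fun c hc => hP2 c hc⟩⟩
  · have s1 : sSup (kSet1 X Y (s₁ + t₁) (fun x y => K₁ x y * K₂ x y)) ≤ a₁ * a₂ :=
      Real.sSup_le hP1 (by positivity)
    have s2 : sSup (kSet2 X Y (s₁ + s₃ + t₁) s₃ (fun x y => K₁ x y * K₂ x y)) ≤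
        b₁ * a₂ + A * (a₁ * b₂) := by
      apply Real.sSup_le hP2
      have hA0 : (0:ℝ) ≤ A := by linarith
      positivity
    unfold kNorm
    have key : a₁ * a₂ + (b₁ * a₂ + A * (a₁ * b₂)) ≤ A * (a₁ + b₁) * (a₂ + b₂) := by
      nlinarith [mul_nonneg na₁ na₂, mul_nonneg nb₁ na₂, mul_nonneg na₁ nb₂,
        mul_nonneg nb₁ nb₂]
    calc _ ≤ a₁ * a₂ + (b₁ * a₂ + A * (a₁ * b₂)) := add_le_add s1 s2
      _ ≤ A * (a₁ + b₁) * (a₂ + b₂) := key
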